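/- Let G be a finite simple graph on vertex set V = Fin n (n ≥ 1) with edge set E, and let k be an integer with 1 ≤ k ≤ n. Consider the classifier M over the n + 2 features {x₀} ∪ V ∪ {w}, where x₀ is feature 0, the nodes of G are features 1,…,n, and w is feature n+1, defined by: M accepts an entity e if and only if either (i) there is an edge {u,v} ∈ E such that e(x₀) = e(u) = e(v) = true and e is false on all other features (including w), or (ii) e(x₀) = e(w) = true and e(v) = false for every node v ∈ V. Let e₀ be the entity assigning false to all features, let c_j := j!·(n+1−j)!/(n+2)! be the Shapley coefficients for n+2 features, let ε := c_{n−1} / (Σ_{i=0}^{k} (k choose i) · c_{n−i}), and let q := −c_{n−1}. Let 𝓘 be the hyperrectangle of vectors p with p(x₀) = 1, p(w) = ε, and 0 ≤ p(v) ≤ 1 for every node v. Then G has a vertex cover of size at most k if and only if there exists p ∈ 𝓘 with Shap(M,e₀,x₀,p) ≥ q. -/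

import Mathlib

/-- The conditional expectation `φ(M,e,S,p)` of the classifier `M` given that the
entity agrees with `e` on `S`, under the product distribution with parameters `p`. -/
noncomputable def phi {m : ℕ} (M : (Fin m → Bool) → Bool) (e : Fin m → Bool)
    (S : Finset (Fin m)) (p : Fin m → ℝ) : ℝ :=
  ∑ e' ∈ Finset.univ.filter (fun e' : Fin m → Bool => ∀ i ∈ S, e' i = e i),
    (∏ i ∈ Sᶜ, (if e' i = true then p i else 1 - p i)) *
      (if M e' = true then (1 : ℝ) else 0)

/-- The SHAP score of feature `x` for classifier `M` and entity `e`, under the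
product distribution with parameters `p` (with `m` features the coefficients are
`c_{j,m} = j! (m - j - 1)! / m!`). -/
noncomputable def Shap {m : ℕ} (M : (Fin m → Bool) → Bool) (e : Fin m → Bool)
    (x : Fin m) (p : Fin m → ℝ) : ℝ :=
  ∑ S ∈ ({x}ᶜ : Finset (Fin m)).powerset,
    ((S.card.factorial * (m - S.card - 1).factorial : ℝ) / m.factorial) *
      (phi M e (insert x S) p - phi M e S p)

/-- The feature (in `Fin (n+2)`) corresponding to the node `v : Fin n` of the graph:
feature `0` is `x₀`, the nodes occupy features `1, …, n`, and `Fin.last (n+1)` is `w`. -/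
abbrev nodeFeature {n : ℕ} (v : Fin n) : Fin (n + 2) := v.succ.castSucc

open Finset

section AuxVC


section Aux
variable {n : ℕ}

lemma nodeFeature_val (v : Fin n) : (nodeFeature v : Fin (n+2)).val = v.val + 1 := rfl

lemma nodeFeature_ne_zero (v : Fin n) : nodeFeature v ≠ 0 := by
  intro h
  have := congrArg Fin.val h
  simp [nodeFeature_val] at this

lemma nodeFeature_ne_last (v : Fin n) : nodeFeature v ≠ Fin.last (n+1) := by
  intro h
  have := congrArg Fin.val h
  simp [nodeFeature_val, Fin.val_last] at this
  omega

lemma zero_ne_last : (0 : Fin (n+2)) ≠ Fin.last (n+1) := by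
  intro h
  have := congrArg Fin.val h
  simp [Fin.val_last] at this

lemma nodeFeature_injective : Function.Injective (nodeFeature (n := n)) := by
  intro a b h
  have := congrArg Fin.val h
  simp [nodeFeature_val] at this
  exact Fin.ext this

lemma fin_trichotomy (i : Fin (n+2)) :
    i = 0 ∨ i = Fin.last (n+1) ∨ ∃ v : Fin n, i = nodeFeature v := by
  rcases Nat.eq_zero_or_pos i.val with h0 | h0
  · exact Or.inl (Fin.ext h0)
  rcases Nat.lt_or_ge i.val (n+1) with h1 | h1
  · refine Or.inr (Or.inr ⟨⟨i.val - 1, by omega⟩, ?_⟩)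
    apply Fin.ext
    simp [nodeFeature_val]
    omega
  · refine Or.inr (Or.inl ?_)
    apply Fin.ext
    have := i.isLt
    simp [Fin.val_last]
    omega

def nEmb (n : ℕ) : Fin n ↪ Fin (n+2) := ⟨nodeFeature, nodeFeature_injective⟩

lemma mem_map_nEmb (T : Finset (Fin n)) (v : Fin n) :
    nodeFeature v ∈ T.map (nEmb n) ↔ v ∈ T := by
  simp only [mem_map, nEmb, Function.Embedding.coeFn_mk]
  constructor
  · rintro ⟨u, hu, h⟩; rwa [← nodeFeature_injective h]
  · exact fun h => ⟨v, h, rfl⟩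

lemma zero_not_mem_map_nEmb (T : Finset (Fin n)) : (0 : Fin (n+2)) ∉ T.map (nEmb n) := by
  simp only [mem_map, nEmb, Function.Embedding.coeFn_mk]
  rintro ⟨u, _, h⟩
  exact nodeFeature_ne_zero u h

lemma last_not_mem_map_nEmb (T : Finset (Fin n)) :
    (Fin.last (n+1)) ∉ T.map (nEmb n) := by
  simp only [mem_map, nEmb, Function.Embedding.coeFn_mk]
  rintro ⟨u, _, h⟩
  exact nodeFeature_ne_last u h

lemma compl_zero_eq : ({0}ᶜ : Finset (Fin (n+2))) = insert (Fin.last (n+1)) (univ.map (nEmb n)) := by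
  ext i
  simp only [mem_compl, mem_singleton, mem_insert]
  constructor
  · intro h
    rcases fin_trichotomy i with h0 | hl | ⟨v, hv⟩
    · exact absurd h0 h
    · exact Or.inl hl
    · exact Or.inr (by rw [hv]; exact (mem_map_nEmb _ _).2 (mem_univ v))
  · rintro (h | h) h0
    · exact zero_ne_last (n := n) (h0 ▸ h)
    · exact zero_not_mem_map_nEmb _ (h0 ▸ h)

end Aux

section Core
variable {n : ℕ}


/-- The Boolean point of the cube determined by `D`. -/
noncomputable def pD (ε : ℝ) (D : Finset (Fin n)) : Fin (n+2) → ℝ :=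
  fun i => if i = 0 then 1 else if i = Fin.last (n+1) then ε
    else if ∃ v ∈ D, nodeFeature v = i then 1 else 0

/-- The entity forced by `pD` outside `S` (with value `b` at `w`), false on `S`. -/
def eHat (D : Finset (Fin n)) (S : Finset (Fin (n+2))) (b : Bool) : Fin (n+2) → Bool :=
  fun i => if i ∈ S then false else if i = 0 then true
    else if i = Fin.last (n+1) then b else decide (∃ v ∈ D, nodeFeature v = i)

lemma eHat_mem_filter (D : Finset (Fin n)) (S : Finset (Fin (n+2))) (b : Bool) :
    eHat D S b ∈ Finset.univ.filter
      (fun e' : Fin (n+2) → Bool => ∀ i ∈ S, e' i = (fun _ => false) i) := by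
  simp only [mem_filter, mem_univ, true_and]
  intro i hi
  simp [eHat, hi]

lemma eHat_last_of_mem (D : Finset (Fin n)) {S : Finset (Fin (n+2))}
    (hw : Fin.last (n+1) ∈ S) (b b' : Bool) : eHat D S b = eHat D S b' := by
  funext i
  unfold eHat
  by_cases hi : i ∈ S
  · simp [hi]
  · have : i ≠ Fin.last (n+1) := fun h => hi (h ▸ hw)
    simp [hi, this]

lemma eHat_nodeFeature (D : Finset (Fin n)) (S : Finset (Fin (n+2))) (b : Bool) (v : Fin n) :
    eHat D S b (nodeFeature v) =
      if nodeFeature v ∈ S then false else decide (v ∈ D) := by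
  unfold eHat
  by_cases hS : nodeFeature v ∈ S
  · simp [hS]
  · rw [if_neg hS, if_neg hS, if_neg (nodeFeature_ne_zero v), if_neg (nodeFeature_ne_last v)]
    simp only [decide_eq_decide]
    constructor
    · rintro ⟨u, hu, h⟩; rwa [← nodeFeature_injective h]
    · exact fun h => ⟨v, h, rfl⟩

/-- Terms of `phi` vanish except possibly at `eHat D S true` and `eHat D S false`. -/
lemma term_eq_zero (ε : ℝ) (D : Finset (Fin n)) (M : (Fin (n+2) → Bool) → Bool)
    {S : Finset (Fin (n+2))} (hS : (0 : Fin (n+2)) ∉ S)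
    {e' : Fin (n+2) → Bool} (he' : ∀ i ∈ S, e' i = false)
    (hne : ∀ b, e' ≠ eHat D S b) :
    (∏ i ∈ Sᶜ, (if e' i = true then pD ε D i else 1 - pD ε D i)) *
      (if M e' = true then (1 : ℝ) else 0) = 0 := by
  -- find a coordinate ≠ last where e' differs from eHat D S false
  have key : ∃ i, i ≠ Fin.last (n+1) ∧ e' i ≠ eHat D S false i := by
    by_contra hcon
    push_neg at hcon
    -- e' agrees with eHat D S false away from last
    by_cases hw : Fin.last (n+1) ∈ S
    · apply hne false
      funext i
      by_cases hi : i = Fin.last (n+1)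
      · subst hi
        rw [he' _ hw]
        simp [eHat, hw]
      · exact hcon i hi
    · -- e' = eHat D S (e' last)
      apply hne (e' (Fin.last (n+1)))
      funext i
      by_cases hi : i = Fin.last (n+1)
      · subst hi
        have hne' : Fin.last (n+1) ≠ (0 : Fin (n+2)) := fun h => zero_ne_last h.symm
        simp [eHat, hw, hne']
      · rw [hcon i hi]
        unfold eHat
        by_cases hiS : i ∈ S
        · simp [hiS]
        · simp only [hiS, if_false]
          by_cases h0 : i = 0
          · simp [h0]
          · simp [h0, hi]
  obtain ⟨i, hil, hid⟩ := key
  have hiS : i ∉ S := by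
    intro hiS
    apply hid
    rw [he' _ hiS]
    simp [eHat, hiS]
  have hfac : (if e' i = true then pD ε D i else 1 - pD ε D i) = 0 := by
    rcases fin_trichotomy i with h0 | hl | ⟨v, hv⟩
    · subst h0
      have : eHat D S false 0 = true := by simp [eHat, hS, zero_ne_last (n := n)]
      have he0 : e' 0 = false := by
        cases h : e' 0
        · rfl
        · exact absurd (h.trans this.symm) hid
      simp [he0, pD]
    · exact absurd hl hil
    · subst hv
      rw [eHat_nodeFeature, if_neg hiS] at hid
      by_cases hvD : v ∈ D
      · have : e' (nodeFeature v) = false := by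
          cases h : e' (nodeFeature v)
          · rfl
          · exact absurd (by rw [h]; simp [hvD]) hid
        have hp : pD ε D (nodeFeature v) = 1 := by
          unfold pD
          rw [if_neg (nodeFeature_ne_zero v), if_neg (nodeFeature_ne_last v),
            if_pos ⟨v, hvD, rfl⟩]
        rw [this, hp]; norm_num
      · have : e' (nodeFeature v) = true := by
          cases h : e' (nodeFeature v)
          · exact absurd (by rw [h]; simp [hvD]) hid
          · rfl
        have hp : pD ε D (nodeFeature v) = 0 := by
          simp only [pD, if_neg (nodeFeature_ne_zero v), if_neg (nodeFeature_ne_last v)]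
          rw [if_neg]
          rintro ⟨u, hu, h⟩
          exact hvD (nodeFeature_injective h ▸ hu)
        rw [this, hp]; norm_num
  rw [Finset.prod_eq_zero (Finset.mem_compl.2 hiS) hfac, zero_mul]


lemma prod_eHat (ε : ℝ) (D : Finset (Fin n)) {S : Finset (Fin (n+2))}
    (hS : (0 : Fin (n+2)) ∉ S) (b : Bool) {i : Fin (n+2)}
    (hiS : i ∉ S) (hil : i ≠ Fin.last (n+1)) :
    (if eHat D S b i = true then pD ε D i else 1 - pD ε D i) = 1 := by
  rcases fin_trichotomy i with h0 | hl | ⟨v, hv⟩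
  · subst h0
    have : eHat D S b 0 = true := by simp [eHat, hS]
    simp [this, pD]
  · exact absurd hl hil
  · subst hv
    rw [eHat_nodeFeature, if_neg hiS]
    by_cases hvD : v ∈ D
    · have hp : pD ε D (nodeFeature v) = 1 := by
        unfold pD
        rw [if_neg (nodeFeature_ne_zero v), if_neg (nodeFeature_ne_last v),
          if_pos ⟨v, hvD, rfl⟩]
      rw [hp]; simp [hvD]
    · have hp : pD ε D (nodeFeature v) = 0 := by
        unfold pD
        rw [if_neg (nodeFeature_ne_zero v), if_neg (nodeFeature_ne_last v), if_neg]
        rintro ⟨u, hu, h⟩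
        exact hvD (nodeFeature_injective h ▸ hu)
      rw [hp]; simp [hvD]

lemma pD_node (ε : ℝ) (D : Finset (Fin n)) (v : Fin n) :
    pD ε D (nodeFeature v) = if v ∈ D then 1 else 0 := by
  unfold pD
  rw [if_neg (nodeFeature_ne_zero v), if_neg (nodeFeature_ne_last v)]
  by_cases h : v ∈ D
  · rw [if_pos ⟨v, h, rfl⟩, if_pos h]
  · rw [if_neg, if_neg h]
    rintro ⟨u, hu, he⟩
    exact h (nodeFeature_injective he ▸ hu)

lemma pD_last (ε : ℝ) (D : Finset (Fin n)) : pD ε D (Fin.last (n+1)) = ε := by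
  unfold pD
  rw [if_neg (fun h => zero_ne_last (n := n) h.symm), if_pos rfl]

lemma phi_eval (ε : ℝ) (D : Finset (Fin n)) (M : (Fin (n+2) → Bool) → Bool)
    {S : Finset (Fin (n+2))} (hS : (0 : Fin (n+2)) ∉ S) :
    phi M (fun _ => false) S (pD ε D) =
      if Fin.last (n+1) ∈ S then (if M (eHat D S false) = true then (1:ℝ) else 0)
      else ε * (if M (eHat D S true) = true then (1:ℝ) else 0)
        + (1-ε) * (if M (eHat D S false) = true then (1:ℝ) else 0) := by
  unfold phi
  by_cases hw : Fin.last (n+1) ∈ S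
  · rw [if_pos hw]
    rw [Finset.sum_eq_single_of_mem (eHat D S false) (eHat_mem_filter D S false)]
    · have hprod : (∏ i ∈ Sᶜ, (if eHat D S false i = true then pD ε D i else 1 - pD ε D i)) = 1 := by
        apply Finset.prod_eq_one
        intro i hi
        have hiS : i ∉ S := Finset.mem_compl.1 hi
        exact prod_eHat ε D hS false hiS (fun h => hiS (h ▸ hw))
      rw [hprod, one_mul]
    · intro e' he' hne
      apply term_eq_zero ε D M hS (by simpa using (Finset.mem_filter.1 he').2)
      intro b
      rw [eHat_last_of_mem D hw b false]
      exact hne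
  · rw [if_neg hw]
    have hwc : Fin.last (n+1) ∈ Sᶜ := Finset.mem_compl.2 hw
    have hneq : eHat D S true ≠ eHat D S false := by
      intro h
      have := congrFun h (Fin.last (n+1))
      have hne0 : Fin.last (n+1) ≠ (0 : Fin (n+2)) := fun h => zero_ne_last (n := n) h.symm
      simp [eHat, hw, hne0] at this
    have hsub : ({eHat D S true, eHat D S false} : Finset (Fin (n+2) → Bool)) ⊆
        Finset.univ.filter (fun e' : Fin (n+2) → Bool => ∀ i ∈ S, e' i = (fun _ => false) i) := by
      intro e' he'
      rcases Finset.mem_insert.1 he' with h | h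
      · exact h ▸ eHat_mem_filter D S true
      · exact (Finset.mem_singleton.1 h) ▸ eHat_mem_filter D S false
    rw [← Finset.sum_subset hsub]
    · rw [Finset.sum_pair hneq]
      have key : ∀ b : Bool,
          (∏ i ∈ Sᶜ, (if eHat D S b i = true then pD ε D i else 1 - pD ε D i))
            = if b then ε else 1 - ε := by
        intro b
        rw [Finset.prod_eq_single_of_mem (Fin.last (n+1)) hwc]
        · have hval : eHat D S b (Fin.last (n+1)) = b := by
            have hne0 : Fin.last (n+1) ≠ (0 : Fin (n+2)) := fun h => zero_ne_last (n := n) h.symm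
            simp [eHat, hw, hne0]
          rw [hval, pD_last]
        · intro i hi hil
          exact prod_eHat ε D hS b (Finset.mem_compl.1 hi) hil
      rw [key true, key false]
      norm_num
    · intro e' he' hne
      apply term_eq_zero ε D M hS (by simpa using (Finset.mem_filter.1 he').2)
      intro b
      intro h
      apply hne
      subst h
      cases b
      · exact Finset.mem_insert.2 (Or.inr (Finset.mem_singleton.2 rfl))
      · exact Finset.mem_insert.2 (Or.inl rfl)



def edgeCond (G : SimpleGraph (Fin n)) (D T : Finset (Fin n)) : Prop :=
  ∃ u v : Fin n, G.Adj u v ∧ (u ∈ D ∧ u ∉ T) ∧ (v ∈ D ∧ v ∉ T) ∧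
    ∀ z : Fin n, z ∈ D → z ∉ T → z = u ∨ z = v

section MEval
variable (D T : Finset (Fin n)) (b : Bool)

lemma eHat_map_zero : eHat D (T.map (nEmb n)) b 0 = true := by
  simp [eHat, zero_not_mem_map_nEmb T]

lemma eHat_map_last : eHat D (T.map (nEmb n)) b (Fin.last (n+1)) = b := by
  have hne0 : Fin.last (n+1) ≠ (0 : Fin (n+2)) := fun h => zero_ne_last (n := n) h.symm
  simp [eHat, last_not_mem_map_nEmb T, hne0]

lemma eHat_map_node (v : Fin n) :
    eHat D (T.map (nEmb n)) b (nodeFeature v) = decide (v ∈ D ∧ v ∉ T) := by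
  rw [eHat_nodeFeature]
  by_cases hv : v ∈ T
  · rw [if_pos ((mem_map_nEmb T v).2 hv)]
    simp [hv]
  · rw [if_neg (fun h => hv ((mem_map_nEmb T v).1 h))]
    simp [hv]

lemma eHat_insert_last :
    eHat D (insert (Fin.last (n+1)) (T.map (nEmb n))) false = eHat D (T.map (nEmb n)) false := by
  funext i
  unfold eHat
  by_cases hi : i ∈ T.map (nEmb n)
  · simp [hi, Finset.mem_insert.2 (Or.inr hi)]
  · by_cases hil : i = Fin.last (n+1)
    · subst hil
      simp [last_not_mem_map_nEmb T, Finset.mem_insert,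
        (fun h => zero_ne_last (n := n) h.symm : Fin.last (n+1) ≠ 0)]
    · have : i ∉ insert (Fin.last (n+1)) (T.map (nEmb n)) := by
        simp [Finset.mem_insert, hil, hi]
      simp [this, hi]

variable {G : SimpleGraph (Fin n)} {M : (Fin (n + 2) → Bool) → Bool}
variable (hM : ∀ e : Fin (n + 2) → Bool, M e = true ↔
      ((∃ u v : Fin n, G.Adj u v ∧
          e 0 = true ∧ e (nodeFeature u) = true ∧ e (nodeFeature v) = true ∧
          ∀ j : Fin (n + 2),
            j ≠ 0 → j ≠ nodeFeature u → j ≠ nodeFeature v → e j = false) ∨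
       (e 0 = true ∧ e (Fin.last (n + 1)) = true ∧
          ∀ v : Fin n, e (nodeFeature v) = false)))
include hM

lemma M_eHat_true : M (eHat D (T.map (nEmb n)) true) = true ↔ D ⊆ T := by
  rw [hM]
  constructor
  · rintro (⟨u, v, hadj, h0, hu, hv, hall⟩ | ⟨h0, hw, hall⟩)
    · exfalso
      have := hall (Fin.last (n+1)) (fun h => zero_ne_last (n := n) h.symm)
        (fun h => nodeFeature_ne_last u h.symm) (fun h => nodeFeature_ne_last v h.symm)
      rw [eHat_map_last] at this
      simp at this
    · intro z hz
      have := hall z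
      rw [eHat_map_node] at this
      by_contra hzT
      simp [hz, hzT] at this
  · intro hDT
    refine Or.inr ⟨eHat_map_zero D T true, eHat_map_last D T true, fun v => ?_⟩
    rw [eHat_map_node]
    by_cases hv : v ∈ D
    · simp [hv, hDT hv]
    · simp [hv]

lemma M_eHat_false : M (eHat D (T.map (nEmb n)) false) = true ↔ edgeCond G D T := by
  rw [hM]
  constructor
  · rintro (⟨u, v, hadj, h0, hu, hv, hall⟩ | ⟨h0, hw, hall⟩)
    · refine ⟨u, v, hadj, ?_, ?_, ?_⟩
      · rw [eHat_map_node] at hu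
        simpa using hu
      · rw [eHat_map_node] at hv
        simpa using hv
      · intro z hzD hzT
        by_contra hcon
        push_neg at hcon
        have := hall (nodeFeature z) (nodeFeature_ne_zero z)
          (fun h => hcon.1 (nodeFeature_injective h))
          (fun h => hcon.2 (nodeFeature_injective h))
        rw [eHat_map_node] at this
        simp [hzD, hzT] at this
    · exfalso
      rw [eHat_map_last] at hw
      simp at hw
  · rintro ⟨u, v, hadj, hu, hv, hall⟩
    refine Or.inl ⟨u, v, hadj, eHat_map_zero D T false, ?_, ?_, ?_⟩
    · rw [eHat_map_node]; simp [hu.1, hu.2]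
    · rw [eHat_map_node]; simp [hv.1, hv.2]
    · intro j hj0 hju hjv
      rcases fin_trichotomy j with h0 | hl | ⟨z, hz⟩
      · exact absurd h0 hj0
      · subst hl; exact eHat_map_last D T false
      · subst hz
        rw [eHat_map_node]
        by_cases hzD : z ∈ D
        · by_cases hzT : z ∈ T
          · simp [hzT]
          · rcases hall z hzD hzT with h | h
            · exact absurd (congrArg nodeFeature h) hju
            · exact absurd (congrArg nodeFeature h) hjv
        · simp [hzD]

end MEval

lemma powerset_map_eq {α β : Type*} (f : α ↪ β) (s : Finset α) :
    (s.map f).powerset = s.powerset.map (Finset.mapEmbedding f).toEmbedding := by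
  ext t
  simp only [Finset.mem_powerset, Finset.mem_map, Finset.mapEmbedding_apply]
  rw [Finset.subset_map_iff]
  constructor
  · rintro ⟨u, hu, rfl⟩
    exact ⟨u, hu, rfl⟩
  · rintro ⟨u, hu, rfl⟩
    exact ⟨u, hu, rfl⟩

section ShapEval
variable {G : SimpleGraph (Fin n)} {M : (Fin (n + 2) → Bool) → Bool}
variable (hM : ∀ e : Fin (n + 2) → Bool, M e = true ↔
      ((∃ u v : Fin n, G.Adj u v ∧
          e 0 = true ∧ e (nodeFeature u) = true ∧ e (nodeFeature v) = true ∧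
          ∀ j : Fin (n + 2),
            j ≠ 0 → j ≠ nodeFeature u → j ≠ nodeFeature v → e j = false) ∨
       (e 0 = true ∧ e (Fin.last (n + 1)) = true ∧
          ∀ v : Fin n, e (nodeFeature v) = false)))
include hM

lemma phi_insert_zero (p : Fin (n+2) → ℝ) (S : Finset (Fin (n+2))) :
    phi M (fun _ => false) (insert 0 S) p = 0 := by
  unfold phi
  apply Finset.sum_eq_zero
  intro e' he'
  have h0 : e' 0 = false :=
    (Finset.mem_filter.1 he').2 0 (Finset.mem_insert_self 0 S)
  have hMe : M e' ≠ true := by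
    intro hcon
    rcases (hM e').1 hcon with ⟨u, v, _, h, _⟩ | ⟨h, _⟩ <;> rw [h0] at h <;> simp at h
  simp [hMe]

open Classical in
lemma shap_eval (c : ℕ → ℝ)
    (hc : ∀ j, c j = (j.factorial * (n + 1 - j).factorial : ℝ) / (n + 2).factorial)
    (ε : ℝ) (D : Finset (Fin n)) :
    Shap M (fun _ => false) 0 (pD ε D) =
      -∑ T ∈ (univ : Finset (Fin n)).powerset,
        (c T.card * ε * (if D ⊆ T then 1 else 0)
          + (c T.card * (1-ε) + c (T.card+1)) * (if edgeCond G D T then 1 else 0)) := by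
  unfold Shap
  have hstep : ∀ S ∈ ({0}ᶜ : Finset (Fin (n+2))).powerset,
      ((S.card.factorial * ((n+2) - S.card - 1).factorial : ℝ) / (n+2).factorial) *
        (phi M (fun _ => false) (insert 0 S) (pD ε D) - phi M (fun _ => false) S (pD ε D))
      = -(c S.card *
          (if Fin.last (n+1) ∈ S then (if M (eHat D S false) = true then (1:ℝ) else 0)
           else ε * (if M (eHat D S true) = true then (1:ℝ) else 0)
             + (1-ε) * (if M (eHat D S false) = true then (1:ℝ) else 0))) := by
    intro S hS
    have h0S : (0 : Fin (n+2)) ∉ S := by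
      intro h
      have := Finset.mem_powerset.1 hS h
      simp at this
    rw [phi_insert_zero hM, phi_eval ε D M h0S, hc]
    have harith : n + 1 - S.card = n + 2 - S.card - 1 := by omega
    rw [harith]
    ring
  rw [Finset.sum_congr rfl hstep, compl_zero_eq,
    Finset.sum_powerset_insert (last_not_mem_map_nEmb (univ : Finset (Fin n))),
    powerset_map_eq, Finset.sum_map, Finset.sum_map]
  simp only [RelEmbedding.coe_toEmbedding, Finset.mapEmbedding_apply]
  rw [← Finset.sum_add_distrib, ← Finset.sum_neg_distrib]
  apply Finset.sum_congr rfl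
  intro T hT
  have h1 : (Fin.last (n+1)) ∉ T.map (nEmb n) := last_not_mem_map_nEmb T
  have h2 : (Fin.last (n+1)) ∈ insert (Fin.last (n+1)) (T.map (nEmb n)) :=
    Finset.mem_insert_self _ _
  simp only [h1, h2, ↓reduceIte]
  simp only [eHat_insert_last]
  have hcard1 : (T.map (nEmb n)).card = T.card := Finset.card_map _
  have hcard2 : (insert (Fin.last (n+1)) (T.map (nEmb n))).card = T.card + 1 := by
    rw [Finset.card_insert_of_notMem h1, hcard1]
  rw [hcard1, hcard2]
  have hB : (if M (eHat D (T.map (nEmb n)) true) = true then (1:ℝ) else 0)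
      = (if D ⊆ T then 1 else 0) := by
    rcases iff_iff_and_or_not_and_not.mp (M_eHat_true D T hM) with ⟨ha, hb⟩ | ⟨ha, hb⟩
    · rw [if_pos ha, if_pos hb]
    · rw [if_neg ha, if_neg hb]
  have hA : (if M (eHat D (T.map (nEmb n)) false) = true then (1:ℝ) else 0)
      = (if edgeCond G D T then 1 else 0) := by
    rcases iff_iff_and_or_not_and_not.mp (M_eHat_false D T hM) with ⟨ha, hb⟩ | ⟨ha, hb⟩
    · rw [if_pos ha, if_pos hb]
    · rw [if_neg ha, if_neg hb]
  simp only [M_eHat_true D T hM, M_eHat_false D T hM]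
  split_ifs <;> ring

end ShapEval

end Core

section Count
variable {n : ℕ}

open Classical in
lemma count_sum (c : ℕ → ℝ) (D : Finset (Fin n)) :
    ∑ T ∈ (univ : Finset (Fin n)).powerset, c T.card * (if D ⊆ T then 1 else 0)
      = ∑ i ∈ Finset.range (n - D.card + 1), ((n - D.card).choose i : ℝ) * c (n - i) := by
  have hd : D.card ≤ n := by
    have := Finset.card_le_univ D
    simpa using this
  have h1 : ∑ T ∈ (univ : Finset (Fin n)).powerset, c T.card * (if D ⊆ T then 1 else 0)
      = ∑ T ∈ (univ : Finset (Fin n)).powerset.filter (fun T => D ⊆ T), c T.card := by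
    rw [Finset.sum_filter]
    apply Finset.sum_congr rfl
    intro T _
    by_cases h : D ⊆ T <;> simp [h]
  have h2 : ∑ T ∈ (univ : Finset (Fin n)).powerset.filter (fun T => D ⊆ T), c T.card
      = ∑ U ∈ Dᶜ.powerset, c (D.card + U.card) := by
    apply Finset.sum_nbij' (i := fun T => T \ D) (j := fun U => D ∪ U)
    · intro T hT
      rw [Finset.mem_powerset]
      intro z hz
      exact Finset.mem_compl.2 (Finset.mem_sdiff.1 hz).2
    · intro U hU
      rw [Finset.mem_filter, Finset.mem_powerset]
      exact ⟨Finset.subset_univ _, Finset.subset_union_left⟩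
    · intro T hT
      have hDT : D ⊆ T := (Finset.mem_filter.1 hT).2
      exact Finset.union_sdiff_of_subset hDT
    · intro U hU
      apply Finset.union_sdiff_cancel_left
      rw [Finset.disjoint_left]
      intro a haD haU
      exact (Finset.mem_compl.1 (Finset.mem_powerset.1 hU haU)) haD
    · intro T hT
      have hDT : D ⊆ T := (Finset.mem_filter.1 hT).2
      congr 1
      rw [Finset.card_sdiff_of_subset hDT]
      have := Finset.card_le_card hDT
      omega
  have h3 : ∑ U ∈ Dᶜ.powerset, c (D.card + U.card)
      = ∑ j ∈ Finset.range (Dᶜ.card + 1), (Dᶜ.card.choose j : ℝ) * c (D.card + j) := by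
    rw [Finset.sum_powerset]
    apply Finset.sum_congr rfl
    intro j _
    have : ∀ U ∈ Finset.powersetCard j Dᶜ, c (D.card + U.card) = c (D.card + j) := by
      intro U hU
      rw [(Finset.mem_powersetCard.1 hU).2]
    rw [Finset.sum_congr rfl this, Finset.sum_const, Finset.card_powersetCard,
      nsmul_eq_mul]
  have hcompl : Dᶜ.card = n - D.card := by
    rw [Finset.card_compl]
    simp
  rw [h1, h2, h3, hcompl]
  rw [← Finset.sum_range_reflect]
  apply Finset.sum_congr rfl
  intro i hi
  have hi' : i ≤ n - D.card := by
    have := Finset.mem_range.1 hi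
    omega
  have h4 : n - D.card + 1 - 1 - i = n - D.card - i := by omega
  rw [h4]
  have h5 : (n - D.card).choose (n - D.card - i) = (n - D.card).choose i :=
    Nat.choose_symm hi'
  have h6 : D.card + (n - D.card - i) = n - i := by omega
  rw [h5, h6]

lemma Fsum_lt (c : ℕ → ℝ) (hcpos : ∀ j, 0 < c j) (n m : ℕ) :
    ∑ i ∈ Finset.range (m+1), (m.choose i : ℝ) * c (n - i)
      < ∑ i ∈ Finset.range (m+1+1), ((m+1).choose i : ℝ) * c (n - i) := by
  have h0 : ∑ i ∈ Finset.range (m+1), (m.choose i : ℝ) * c (n-i)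
      = ∑ i ∈ Finset.range (m+2), (m.choose i : ℝ) * c (n-i) := by
    rw [Finset.sum_range_succ (f := fun i => (m.choose i : ℝ) * c (n-i)) (n := m+1)]
    have : (m.choose (m+1) : ℝ) = 0 := by
      rw [Nat.choose_eq_zero_of_lt (by omega)]
      simp
    rw [this, zero_mul, add_zero]
  rw [h0]
  apply Finset.sum_lt_sum
  · intro i _
    have h := Nat.choose_le_choose i (Nat.le_succ m)
    exact mul_le_mul_of_nonneg_right (by exact_mod_cast h) (le_of_lt (hcpos _))
  · refine ⟨1, Finset.mem_range.2 (by omega), ?_⟩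
    apply mul_lt_mul_of_pos_right _ (hcpos _)
    rw [Nat.choose_one_right, Nat.choose_one_right]
    exact_mod_cast Nat.lt_succ_self m

lemma Fsum_strictMono (c : ℕ → ℝ) (hcpos : ∀ j, 0 < c j) (n : ℕ) :
    StrictMono (fun m => ∑ i ∈ Finset.range (m+1), (m.choose i : ℝ) * c (n - i)) :=
  strictMono_nat_of_lt_succ (fun m => Fsum_lt c hcpos n m)

end Count

section Multi
variable {m : ℕ}

lemma phi_update (M : (Fin m → Bool) → Bool) (e : Fin m → Bool)
    (S : Finset (Fin m)) (p : Fin m → ℝ) (i : Fin m) (t : ℝ) :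
    phi M e S (Function.update p i t)
      = (1 - t) * phi M e S (Function.update p i 0)
        + t * phi M e S (Function.update p i 1) := by
  unfold phi
  rw [Finset.mul_sum, Finset.mul_sum, ← Finset.sum_add_distrib]
  apply Finset.sum_congr rfl
  intro e' _
  by_cases hi : i ∈ S
  · have hprod : ∀ s : ℝ,
        (∏ j ∈ Sᶜ, (if e' j = true then Function.update p i s j
          else 1 - Function.update p i s j))
          = (∏ j ∈ Sᶜ, (if e' j = true then p j else 1 - p j)) := by
      intro s
      apply Finset.prod_congr rfl
      intro j hj
      have hji : j ≠ i := fun h => (Finset.mem_compl.1 hj) (h ▸ hi)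
      rw [Function.update_of_ne hji]
    rw [hprod, hprod, hprod]
    ring
  · have hic : i ∈ Sᶜ := Finset.mem_compl.2 hi
    have hsplit : ∀ s : ℝ,
        (∏ j ∈ Sᶜ, (if e' j = true then Function.update p i s j
          else 1 - Function.update p i s j))
          = (if e' i = true then s else 1 - s) *
            ∏ j ∈ Sᶜ.erase i, (if e' j = true then p j else 1 - p j) := by
      intro s
      rw [← Finset.mul_prod_erase _ _ hic, Function.update_self]
      congr 1
      apply Finset.prod_congr rfl
      intro j hj
      rw [Function.update_of_ne (Finset.ne_of_mem_erase hj)]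
    rw [hsplit, hsplit, hsplit]
    by_cases hMe : M e' = true <;> cases h : e' i <;> simp [hMe, h] <;> ring

lemma shap_update (M : (Fin m → Bool) → Bool) (e : Fin m → Bool) (x : Fin m)
    (p : Fin m → ℝ) (i : Fin m) (t : ℝ) :
    Shap M e x (Function.update p i t)
      = (1 - t) * Shap M e x (Function.update p i 0)
        + t * Shap M e x (Function.update p i 1) := by
  unfold Shap
  rw [Finset.mul_sum, Finset.mul_sum, ← Finset.sum_add_distrib]
  apply Finset.sum_congr rfl
  intro S _
  rw [phi_update M e (insert x S) p i t, phi_update M e S p i t]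
  ring

end Multi

section Round
variable {n : ℕ}

lemma round_nodes (M : (Fin (n+2) → Bool) → Bool) (e : Fin (n+2) → Bool) (x : Fin (n+2))
    (p : Fin (n+2) → ℝ) (hbox : ∀ v : Fin n, 0 ≤ p (nodeFeature v) ∧ p (nodeFeature v) ≤ 1)
    (s : Finset (Fin n)) :
    ∃ p' : Fin (n+2) → ℝ,
      (∀ i : Fin (n+2), (∀ v ∈ s, i ≠ nodeFeature v) → p' i = p i) ∧
      (∀ v ∈ s, p' (nodeFeature v) = 0 ∨ p' (nodeFeature v) = 1) ∧
      Shap M e x p ≤ Shap M e x p' := by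
  classical
  induction s using Finset.induction with
  | empty => exact ⟨p, fun i _ => rfl, by simp, le_refl _⟩
  | @insert a s ha ih =>
    obtain ⟨p', hagree, hbool, hle⟩ := ih
    set i := nodeFeature a with hidef
    have hpi : p' i = p i := by
      apply hagree
      intro v hv h
      rw [hidef] at h
      have hav : a = v := nodeFeature_injective h
      rw [← hav] at hv
      exact ha hv
    have ht0 : 0 ≤ p' i := hpi ▸ (hbox a).1
    have ht1 : p' i ≤ 1 := hpi ▸ (hbox a).2
    have hp'eq : Function.update p' i (p' i) = p' := by
      funext j
      by_cases h : j = i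
      · subst h; rw [Function.update_self]
      · rw [Function.update_of_ne h]
    have hcombo : Shap M e x p' = (1 - p' i) * Shap M e x (Function.update p' i 0)
        + p' i * Shap M e x (Function.update p' i 1) := by
      conv_lhs => rw [← hp'eq]
      exact shap_update M e x p' i (p' i)
    have key : ∀ b : ℝ, (b = 0 ∨ b = 1) →
        (∀ j : Fin (n+2), (∀ v ∈ insert a s, j ≠ nodeFeature v) →
          Function.update p' i b j = p j) ∧
        (∀ v ∈ insert a s, Function.update p' i b (nodeFeature v) = 0 ∨
          Function.update p' i b (nodeFeature v) = 1) := by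
      intro b hb
      constructor
      · intro j hj
        have hji : j ≠ i := hj a (Finset.mem_insert_self a s)
        rw [Function.update_of_ne hji]
        exact hagree j (fun v hv => hj v (Finset.mem_insert_of_mem hv))
      · intro v hv
        rcases Finset.mem_insert.1 hv with rfl | hv'
        · rw [← hidef, Function.update_self]
          exact hb
        · have hvi : nodeFeature v ≠ i := by
            intro h
            rw [hidef] at h
            have hva : v = a := nodeFeature_injective h
            rw [hva] at hv'
            exact ha hv'
          rw [Function.update_of_ne hvi]
          exact hbool v hv'
    by_cases hcase : Shap M e x (Function.update p' i 0) ≤ Shap M e x (Function.update p' i 1)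
    · obtain ⟨k1, k2⟩ := key 1 (Or.inr rfl)
      refine ⟨Function.update p' i 1, k1, k2, ?_⟩
      calc Shap M e x p ≤ Shap M e x p' := hle
        _ ≤ Shap M e x (Function.update p' i 1) := by rw [hcombo]; nlinarith
    · obtain ⟨k1, k2⟩ := key 0 (Or.inl rfl)
      refine ⟨Function.update p' i 0, k1, k2, ?_⟩
      push_neg at hcase
      calc Shap M e x p ≤ Shap M e x p' := hle
        _ ≤ Shap M e x (Function.update p' i 0) := by rw [hcombo]; nlinarith

end Round

end AuxVC

theorem vertex_cover_iff_region_max_shap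
    (n : ℕ) (hn : 1 ≤ n)
    (G : SimpleGraph (Fin n)) (k : ℕ) (hk1 : 1 ≤ k) (hkn : k ≤ n)
    (M : (Fin (n + 2) → Bool) → Bool)
    (hM : ∀ e : Fin (n + 2) → Bool, M e = true ↔
      ((∃ u v : Fin n, G.Adj u v ∧
          e 0 = true ∧ e (nodeFeature u) = true ∧ e (nodeFeature v) = true ∧
          ∀ j : Fin (n + 2),
            j ≠ 0 → j ≠ nodeFeature u → j ≠ nodeFeature v → e j = false) ∨
       (e 0 = true ∧ e (Fin.last (n + 1)) = true ∧
          ∀ v : Fin n, e (nodeFeature v) = false)))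
    (c : ℕ → ℝ)
    (hc : ∀ j, c j = (j.factorial * (n + 1 - j).factorial : ℝ) / (n + 2).factorial)
    (ε q : ℝ)
    (hε : ε = c (n - 1) / (∑ i ∈ Finset.range (k + 1), (k.choose i : ℝ) * c (n - i)))
    (hq : q = - c (n - 1)) :
    (∃ C : Finset (Fin n), C.card ≤ k ∧ ∀ u v : Fin n, G.Adj u v → u ∈ C ∨ v ∈ C)
      ↔ ∃ p : Fin (n + 2) → ℝ,
          (p 0 = 1 ∧ p (Fin.last (n + 1)) = ε ∧
            ∀ v : Fin n, 0 ≤ p (nodeFeature v) ∧ p (nodeFeature v) ≤ 1) ∧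
          Shap M (fun _ => false) 0 p ≥ q := by
  classical
  have hcpos : ∀ j, 0 < c j := by
    intro j
    rw [hc]
    apply div_pos
    · exact mul_pos (by exact_mod_cast Nat.factorial_pos j)
        (by exact_mod_cast Nat.factorial_pos (n + 1 - j))
    · exact_mod_cast Nat.factorial_pos (n + 2)
  set Fk : ℝ := ∑ i ∈ Finset.range (k + 1), (k.choose i : ℝ) * c (n - i) with hFk
  have hFpos : ∀ m : ℕ, 0 < ∑ i ∈ Finset.range (m + 1), (m.choose i : ℝ) * c (n - i) := by
    intro m
    apply Finset.sum_pos
    · intro i hi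
      apply mul_pos _ (hcpos _)
      have hi' : i ≤ m := Finset.mem_range_succ_iff.1 hi
      exact_mod_cast Nat.choose_pos hi'
    · exact ⟨0, Finset.mem_range.2 (by omega)⟩
  have hFkpos : 0 < Fk := hFpos k
  have hεpos : 0 < ε := by
    rw [hε]
    exact div_pos (hcpos _) hFkpos
  have hεFk : ε * Fk = c (n - 1) := by
    rw [hε]
    field_simp
  have hε1 : ε ≤ 1 := by
    rw [hε, div_le_one hFkpos]
    have h1mem : 1 ∈ Finset.range (k + 1) := Finset.mem_range.2 (by omega)
    have hnn : ∀ i ∈ Finset.range (k+1), 0 ≤ (k.choose i : ℝ) * c (n - i) := by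
      intro i hi
      have hch : 0 < k.choose i := Nat.choose_pos (Finset.mem_range_succ_iff.1 hi)
      exact le_of_lt (mul_pos (by exact_mod_cast hch) (hcpos _))
    have hsingle := Finset.single_le_sum hnn h1mem
    have hk' : (1 : ℝ) ≤ (k.choose 1 : ℝ) := by
      rw [Nat.choose_one_right]
      exact_mod_cast hk1
    calc c (n - 1) = 1 * c (n - 1) := by ring
      _ ≤ (k.choose 1 : ℝ) * c (n - 1) :=
          mul_le_mul_of_nonneg_right hk' (le_of_lt (hcpos _))
      _ ≤ Fk := hsingle
  constructor
  · -- forward direction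
    rintro ⟨C, hCk, hCcov⟩
    obtain ⟨C', hCC', hC'u, hC'card⟩ := Finset.exists_subsuperset_card_eq
      (Finset.subset_univ C) hCk (by simpa using hkn)
    set D : Finset (Fin n) := C'ᶜ with hD
    have hDcard : D.card = n - k := by
      rw [hD, Finset.card_compl, hC'card]
      simp
    refine ⟨pD ε D, ⟨?_, pD_last ε D, ?_⟩, ?_⟩
    · unfold pD
      rw [if_pos rfl]
    · intro v
      rw [pD_node]
      by_cases h : v ∈ D <;> simp [h]
    · rw [shap_eval hM c hc ε D, hq, ge_iff_le, neg_le_neg_iff]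
      have hnoedge : ∀ T, ¬ edgeCond G D T := by
        rintro T ⟨u, v, hadj, hu, hv, -⟩
        rcases hCcov u v hadj with h | h
        · exact (Finset.mem_compl.1 hu.1) (hCC' h)
        · exact (Finset.mem_compl.1 hv.1) (hCC' h)
      have hterm : ∀ T ∈ (Finset.univ : Finset (Fin n)).powerset,
          (c T.card * ε * (if D ⊆ T then 1 else 0)
            + (c T.card * (1 - ε) + c (T.card + 1)) *
              (if edgeCond G D T then 1 else 0))
          = ε * (c T.card * (if D ⊆ T then 1 else 0)) := by
        intro T _
        rw [if_neg (hnoedge T)]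
        ring
      rw [Finset.sum_congr rfl hterm, ← Finset.mul_sum, count_sum c D]
      have hmk : n - D.card = k := by
        rw [hDcard]
        omega
      rw [hmk, ← hFk, hεFk]
  · -- backward direction
    rintro ⟨p, ⟨hp0, hpw, hpbox⟩, hShap⟩
    obtain ⟨p', hagree, hbool, hle⟩ :=
      round_nodes M (fun _ => false) 0 p hpbox Finset.univ
    have hShap' : Shap M (fun _ => false) 0 p' ≥ q := le_trans hShap hle
    set D : Finset (Fin n) :=
      Finset.univ.filter (fun v => p' (nodeFeature v) = 1) with hDdef
    have hp'D : p' = pD ε D := by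
      funext i
      rcases fin_trichotomy i with h | h | ⟨v, h⟩
      · subst h
        rw [hagree 0 (fun v _ h => nodeFeature_ne_zero v h.symm), hp0]
        unfold pD
        rw [if_pos rfl]
      · subst h
        rw [hagree _ (fun v _ h => nodeFeature_ne_last v h.symm), hpw, pD_last]
      · subst h
        rw [pD_node]
        rcases hbool v (Finset.mem_univ v) with h0 | h1
        · rw [if_neg, h0]
          intro hmem
          rw [hDdef] at hmem
          have := (Finset.mem_filter.1 hmem).2
          rw [h0] at this
          exact zero_ne_one this
        · rw [if_pos, h1]
          rw [hDdef]
          exact Finset.mem_filter.2 ⟨Finset.mem_univ v, h1⟩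
    rw [hp'D, shap_eval hM c hc ε D, hq, ge_iff_le, neg_le_neg_iff] at hShap'
    by_cases hedge : ∃ u v : Fin n, G.Adj u v ∧ u ∈ D ∧ v ∈ D
    · exfalso
      obtain ⟨u, v, hadj, huD, hvD⟩ := hedge
      have huv : u ≠ v := G.ne_of_adj hadj
      have hn2 : 2 ≤ n := by
        have := Finset.card_le_univ ({u, v} : Finset (Fin n))
        rw [Finset.card_pair huv] at this
        simpa using this
      set T0 : Finset (Fin n) := ({u, v} : Finset (Fin n))ᶜ with hT0
      have hterm_nonneg : ∀ T ∈ (Finset.univ : Finset (Fin n)).powerset,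
          0 ≤ (c T.card * ε * (if D ⊆ T then 1 else 0)
            + (c T.card * (1 - ε) + c (T.card + 1)) *
              (if edgeCond G D T then 1 else 0)) := by
        intro T _
        have h1 : (0:ℝ) ≤ if D ⊆ T then 1 else 0 := by positivity
        have h2 : (0:ℝ) ≤ if edgeCond G D T then 1 else 0 := by positivity
        have e1 : (0:ℝ) ≤ c T.card * ε * (if D ⊆ T then 1 else 0) :=
          mul_nonneg (mul_nonneg (le_of_lt (hcpos _)) (le_of_lt hεpos)) h1
        have e2 : (0:ℝ) ≤ (c T.card * (1 - ε) + c (T.card + 1)) *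
            (if edgeCond G D T then 1 else 0) :=
          mul_nonneg (add_nonneg (mul_nonneg (le_of_lt (hcpos _)) (by linarith))
            (le_of_lt (hcpos _))) h2
        linarith
      have hsub : ({Finset.univ, T0} : Finset (Finset (Fin n)))
          ⊆ (Finset.univ : Finset (Fin n)).powerset := by
        intro T _
        exact Finset.mem_powerset.2 (Finset.subset_univ T)
      have huT0 : u ∉ T0 := by
        rw [hT0]
        simp
      have hne : (Finset.univ : Finset (Fin n)) ≠ T0 := by
        intro h
        exact huT0 (h ▸ Finset.mem_univ u)
      have hpair := Finset.sum_le_sum_of_subset_of_nonneg hsub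
        (fun T hT _ => hterm_nonneg T hT)
      rw [Finset.sum_pair hne] at hpair
      -- bound the two terms from below
      have huniv_term : ε * c n
          ≤ c (Finset.univ : Finset (Fin n)).card * ε * (if D ⊆ Finset.univ then 1 else 0)
            + (c (Finset.univ : Finset (Fin n)).card * (1 - ε)
              + c ((Finset.univ : Finset (Fin n)).card + 1)) *
              (if edgeCond G D Finset.univ then 1 else 0) := by
        rw [if_pos (Finset.subset_univ D)]
        have h2 : (0:ℝ) ≤ if edgeCond G D Finset.univ then 1 else 0 := by positivity
        have hcard : (Finset.univ : Finset (Fin n)).card = n := by simp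
        rw [hcard]
        have e2 : (0:ℝ) ≤ (c n * (1 - ε) + c (n + 1)) *
            (if edgeCond G D Finset.univ then 1 else 0) :=
          mul_nonneg (add_nonneg (mul_nonneg (le_of_lt (hcpos _)) (by linarith))
            (le_of_lt (hcpos _))) h2
        linarith
      have hT0card : T0.card = n - 2 := by
        rw [hT0, Finset.card_compl, Finset.card_pair huv]
        simp
      have hT0edge : edgeCond G D T0 := by
        refine ⟨u, v, hadj, ⟨huD, huT0⟩, ⟨hvD, ?_⟩, ?_⟩
        · rw [hT0]; simp
        · intro z hzD hzT
          rw [hT0] at hzT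
          simp only [Finset.mem_compl, not_not, Finset.mem_insert,
            Finset.mem_singleton] at hzT
          exact hzT
      have hT0_term : c (n - 1)
          ≤ c T0.card * ε * (if D ⊆ T0 then 1 else 0)
            + (c T0.card * (1 - ε) + c (T0.card + 1)) *
              (if edgeCond G D T0 then 1 else 0) := by
        rw [if_pos hT0edge, hT0card]
        have hn1 : n - 2 + 1 = n - 1 := by omega
        rw [hn1]
        have h1 : (0:ℝ) ≤ if D ⊆ T0 then 1 else 0 := by positivity
        have e1 : (0:ℝ) ≤ c (n-2) * ε * (if D ⊆ T0 then 1 else 0) :=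
          mul_nonneg (mul_nonneg (le_of_lt (hcpos _)) (le_of_lt hεpos)) h1
        have e3 : (0:ℝ) ≤ c (n-2) * (1 - ε) :=
          mul_nonneg (le_of_lt (hcpos _)) (by linarith)
        linarith
      have hεcn : 0 < ε * c n := mul_pos hεpos (hcpos n)
      linarith
    · have hnoedge : ∀ T, ¬ edgeCond G D T := by
        rintro T ⟨u, v, hadj, hu, hv, -⟩
        exact hedge ⟨u, v, hadj, hu.1, hv.1⟩
      have hterm : ∀ T ∈ (Finset.univ : Finset (Fin n)).powerset,
          (c T.card * ε * (if D ⊆ T then 1 else 0)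
            + (c T.card * (1 - ε) + c (T.card + 1)) *
              (if edgeCond G D T then 1 else 0))
          = ε * (c T.card * (if D ⊆ T then 1 else 0)) := by
        intro T _
        rw [if_neg (hnoedge T)]
        ring
      rw [Finset.sum_congr rfl hterm, ← Finset.mul_sum, count_sum c D] at hShap'
      set m : ℕ := n - D.card with hm
      rw [← hεFk] at hShap'
      have hFle : (∑ i ∈ Finset.range (m + 1), (m.choose i : ℝ) * c (n - i)) ≤ Fk :=
        le_of_mul_le_mul_left (by linarith) hεpos
      have hmk : m ≤ k := by
        by_contra hcon
        push_neg at hcon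
        have := Fsum_strictMono c hcpos n hcon
        simp only at this
        rw [← hFk] at this
        linarith
      refine ⟨Dᶜ, ?_, ?_⟩
      · rw [Finset.card_compl]
        have h1 := hmk
        rw [hm] at h1
        have h2 : Fintype.card (Fin n) = n := Fintype.card_fin n
        omega
      · intro u v hadj
        by_contra hcon
        push_neg at hcon
        rw [Finset.mem_compl, not_not, Finset.mem_compl, not_not] at hcon
        exact hedge ⟨u, v, hadj, hcon.1, hcon.2⟩
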